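/- Let α be an algebraic number with 0 < α < 1 such that N₀[α] is atomic. Then ρ(N₀[α]) = ∞. -/

import Mathlib

/-- `N₀[α]`: the additive submonoid of ℝ generated by the powers of `α`. -/
def Nmon (α : ℝ) : AddSubmonoid ℝ := AddSubmonoid.closure (Set.range fun n : ℕ => α ^ n)

/-- `a` is an atom of the submonoid `M`. -/
def IsAtomOf (M : AddSubmonoid ℝ) (a : ℝ) : Prop :=
  a ∈ M ∧ a ≠ 0 ∧ ∀ b c : ℝ, b ∈ M → c ∈ M → a = b + c → b = 0 ∨ c = 0

/-- `M` is atomic: every nonzero element is a sum of atoms. -/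
def IsAtomicM (M : AddSubmonoid ℝ) : Prop :=
  ∀ x ∈ M, x ≠ 0 → ∃ S : Multiset ℝ, (∀ a ∈ S, IsAtomOf M a) ∧ S.sum = x

/-- The set of factorization lengths of `x` in `M`. -/
def LSet (M : AddSubmonoid ℝ) (x : ℝ) : Set ℕ :=
  {n | ∃ S : Multiset ℝ, (∀ a ∈ S, IsAtomOf M a) ∧ S.sum = x ∧ Multiset.card S = n}

namespace Stmt9Aux

open Polynomial Multiset

/-- The value of a multiset of exponents. -/
noncomputable def pv (α : ℝ) (T : Multiset ℕ) : ℝ := (T.map fun n => α ^ n).sum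

variable {α : ℝ}

lemma pv_zero : pv α 0 = 0 := rfl

lemma pv_cons {n : ℕ} {T : Multiset ℕ} : pv α (n ::ₘ T) = α ^ n + pv α T := by
  simp [pv]

lemma pv_nonneg (h0 : 0 < α) (T : Multiset ℕ) : 0 ≤ pv α T := by
  refine Multiset.sum_nonneg ?_
  intro y hy
  obtain ⟨e, _, rfl⟩ := Multiset.mem_map.mp hy
  positivity

lemma pv_pos (h0 : 0 < α) {T : Multiset ℕ} (hT : T ≠ 0) : 0 < pv α T := by
  obtain ⟨e, he⟩ := Multiset.exists_mem_of_ne_zero hT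
  have h := (Multiset.cons_erase he).symm
  rw [h, pv_cons]
  have := pv_nonneg h0 (T.erase e)
  have := pow_pos h0 e
  linarith

lemma pow_mem (n : ℕ) : α ^ n ∈ Nmon α :=
  AddSubmonoid.subset_closure ⟨n, rfl⟩

lemma pv_mem (T : Multiset ℕ) : pv α T ∈ Nmon α := by
  refine AddSubmonoid.multiset_sum_mem _ _ ?_
  intro y hy
  obtain ⟨e, _, rfl⟩ := Multiset.mem_map.mp hy
  exact pow_mem e

lemma mem_iff {x : ℝ} : x ∈ Nmon α ↔ ∃ T : Multiset ℕ, pv α T = x := by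
  constructor
  · intro hx
    induction hx using AddSubmonoid.closure_induction with
    | mem y hy =>
      obtain ⟨n, rfl⟩ := hy
      exact ⟨{n}, by simp [pv]⟩
    | zero => exact ⟨0, rfl⟩
    | add x y _ _ hx hy =>
      obtain ⟨T, rfl⟩ := hx
      obtain ⟨T', rfl⟩ := hy
      exact ⟨T + T', by simp [pv]⟩
  · rintro ⟨T, rfl⟩
    exact pv_mem T

lemma mem_nonneg (h0 : 0 < α) {x : ℝ} (hx : x ∈ Nmon α) : 0 ≤ x := by
  obtain ⟨T, rfl⟩ := mem_iff.mp hx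
  exact pv_nonneg h0 T

lemma pv_map_add (t : ℕ) (T : Multiset ℕ) :
    pv α (T.map fun e => t + e) = α ^ t * pv α T := by
  unfold pv
  rw [Multiset.map_map, ← Multiset.sum_map_mul_left]
  congr 1
  apply Multiset.map_congr rfl
  intro e _
  simp [pow_add]

lemma mul_pow_mem (t : ℕ) {x : ℝ} (hx : x ∈ Nmon α) : α ^ t * x ∈ Nmon α := by
  obtain ⟨T, rfl⟩ := mem_iff.mp hx
  rw [← pv_map_add]
  exact pv_mem _

lemma atom_eq_pow (h0 : 0 < α) {a : ℝ} (ha : IsAtomOf (Nmon α) a) : ∃ e, α ^ e = a := by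
  obtain ⟨T, hT⟩ := mem_iff.mp ha.1
  have hT0 : T ≠ 0 := by
    rintro rfl
    exact ha.2.1 (hT.symm.trans pv_zero)
  obtain ⟨e, he⟩ := Multiset.exists_mem_of_ne_zero hT0
  have hTe := (Multiset.cons_erase he).symm
  rw [hTe, pv_cons] at hT
  rcases ha.2.2 (α ^ e) (pv α (T.erase e)) (pow_mem e) (pv_mem _) hT.symm with h | h
  · exact absurd h (pow_pos h0 e).ne'
  · exact ⟨e, by rw [← hT, h, add_zero]⟩

lemma not_atom_above (h0 : 0 < α) {n : ℕ} {b c : ℝ}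
    (hb : b ∈ Nmon α) (hc : c ∈ Nmon α) (hb0 : b ≠ 0) (hc0 : c ≠ 0)
    (heq : α ^ n = b + c) {q : ℕ} (hq : n ≤ q) : ¬ IsAtomOf (Nmon α) (α ^ q) := by
  intro hatom
  have hsplit : α ^ q = α ^ (q - n) * b + α ^ (q - n) * c := by
    rw [← mul_add, ← heq, ← pow_add]
    congr 1
    omega
  rcases hatom.2.2 _ _ (mul_pow_mem _ hb) (mul_pow_mem _ hc) hsplit with h | h
  · rcases mul_eq_zero.mp h with h' | h'
    · exact (pow_pos h0 _).ne' h'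
    · exact hb0 h'
  · rcases mul_eq_zero.mp h with h' | h'
    · exact (pow_pos h0 _).ne' h'
    · exact hc0 h'

lemma pow_atom (h0 : 0 < α) (h1 : α < 1) (hat : IsAtomicM (Nmon α)) (n : ℕ) :
    IsAtomOf (Nmon α) (α ^ n) := by
  refine ⟨pow_mem n, (pow_pos h0 n).ne', ?_⟩
  intro b c hb hc heq
  by_contra hbc
  push_neg at hbc
  obtain ⟨hb0, hc0⟩ := hbc
  obtain ⟨S, hS, hsum⟩ := hat (α ^ (n + 1)) (pow_mem _) (pow_pos h0 _).ne'
  have hS0 : S ≠ 0 := by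
    rintro rfl
    exact (pow_pos h0 (n + 1)).ne' (by simpa using hsum.symm)
  obtain ⟨a, ha⟩ := Multiset.exists_mem_of_ne_zero hS0
  have hatom := hS a ha
  obtain ⟨e, rfl⟩ := atom_eq_pow h0 hatom
  have he : e < n := by
    by_contra h
    push_neg at h
    exact not_atom_above h0 hb hc hb0 hc0 heq h hatom
  have hle : α ^ e ≤ α ^ (n + 1) := by
    have hSe := (Multiset.cons_erase ha).symm
    rw [hSe, Multiset.sum_cons] at hsum
    have h2 : 0 ≤ (S.erase (α ^ e)).sum := by
      refine Multiset.sum_nonneg ?_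
      intro y hy
      exact mem_nonneg h0 (hS y (Multiset.mem_of_mem_erase hy)).1
    linarith
  have : α ^ (n + 1) < α ^ e := pow_lt_pow_right_of_lt_one₀ h0 h1 (by omega)
  linarith

/-- From algebraicity: a nontrivial relation between sums of powers with
different numbers of terms. -/
lemma exists_rel (h0 : 0 < α) (h1 : α < 1) (halg : IsAlgebraic ℚ α) :
    ∃ E F : Multiset ℕ, pv α E = pv α F ∧ Multiset.card E ≠ Multiset.card F := by
  have halgZ : IsAlgebraic ℤ α := (IsFractionRing.isAlgebraic_iff ℤ ℚ ℝ).mpr halg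
  obtain ⟨p, hp0, hpα⟩ := halgZ
  obtain ⟨q, hfac, hndvd⟩ := p.exists_eq_pow_rootMultiplicity_mul_and_not_dvd hp0 1
  have hq1 : q.eval 1 ≠ 0 := fun h => hndvd (Polynomial.dvd_iff_isRoot.mpr h)
  have hqα : Polynomial.aeval α q = 0 := by
    rw [hfac, map_mul, map_pow, map_sub, Polynomial.aeval_X, Polynomial.aeval_C] at hpα
    rcases mul_eq_zero.mp hpα with h | h
    · exfalso
      have hne : α - (algebraMap ℤ ℝ) 1 ≠ 0 := by
        simp only [map_one]
        intro hsub
        rw [sub_eq_zero] at hsub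
        linarith
      exact hne (pow_eq_zero_iff'.mp h).1
    · exact h
  set N := q.natDegree + 1 with hN
  have hpvE : ∀ (r : ℕ → ℕ),
      pv α ((Finset.range N).val.bind fun i => Multiset.replicate (r i) i)
        = ∑ i ∈ Finset.range N, (r i : ℝ) * α ^ i := by
    intro r
    unfold pv
    rw [Multiset.map_bind, Multiset.sum_bind, Finset.sum_eq_multiset_sum]
    congr 1
    apply Multiset.map_congr rfl
    intro i _
    rw [Multiset.map_replicate, Multiset.sum_replicate, nsmul_eq_mul]
  have hcard : ∀ (r : ℕ → ℕ),
      Multiset.card ((Finset.range N).val.bind fun i => Multiset.replicate (r i) i)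
        = ∑ i ∈ Finset.range N, r i := by
    intro r
    rw [Multiset.card_bind, Finset.sum_eq_multiset_sum]
    congr 1
    apply Multiset.map_congr rfl
    intro i _
    simp
  refine ⟨(Finset.range N).val.bind fun i => Multiset.replicate (q.coeff i).toNat i,
    (Finset.range N).val.bind fun i => Multiset.replicate (-(q.coeff i)).toNat i, ?_, ?_⟩
  · have h1' := hpvE fun i => (q.coeff i).toNat
    have h2' := hpvE fun i => (-(q.coeff i)).toNat
    rw [h1', h2']
    have hsub : (∑ i ∈ Finset.range N, (((q.coeff i).toNat : ℝ)) * α ^ i)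
        - (∑ i ∈ Finset.range N, (((-(q.coeff i)).toNat : ℝ)) * α ^ i) = 0 := by
      rw [← Finset.sum_sub_distrib, ← hqα, Polynomial.aeval_eq_sum_range]
      apply Finset.sum_congr rfl
      intro i _
      rw [zsmul_eq_mul, ← sub_mul]
      congr 1
      have hz : ((q.coeff i).toNat : ℤ) - ((-(q.coeff i)).toNat : ℤ) = q.coeff i := by omega
      exact_mod_cast congrArg (fun z : ℤ => (z : ℝ)) hz
    linarith
  · have h1' := hcard fun i => (q.coeff i).toNat
    have h2' := hcard fun i => (-(q.coeff i)).toNat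
    rw [h1', h2']
    intro hcc
    apply hq1
    have hint : ((∑ i ∈ Finset.range N, (q.coeff i).toNat : ℕ) : ℤ)
        - ((∑ i ∈ Finset.range N, (-(q.coeff i)).toNat : ℕ) : ℤ) = q.eval 1 := by
      push_cast
      rw [← Finset.sum_sub_distrib, Polynomial.eval_eq_sum_range]
      apply Finset.sum_congr rfl
      intro i _
      rw [one_pow, mul_one]
      omega
    rw [hcc, sub_self] at hint
    exact hint.symm

/-- `k`-fold "multiplication" of a multiset of exponents. -/
def mpow (E : Multiset ℕ) : ℕ → Multiset ℕ
  | 0 => {0}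
  | k + 1 => (mpow E k).bind fun x => E.map fun e => x + e

lemma card_mpow (E : Multiset ℕ) (k : ℕ) :
    Multiset.card (mpow E k) = (Multiset.card E) ^ k := by
  induction k with
  | zero => rfl
  | succ k ih =>
    rw [mpow, Multiset.card_bind]
    have : ((mpow E k).map (Multiset.card ∘ fun x => E.map fun e => x + e))
        = Multiset.replicate (Multiset.card (mpow E k)) (Multiset.card E) := by
      rw [← Multiset.map_const']
      apply Multiset.map_congr rfl
      intro x _
      simp
    rw [this, Multiset.sum_replicate, smul_eq_mul, ih]
    ring

lemma pv_mpow (E : Multiset ℕ) (k : ℕ) : pv α (mpow E k) = (pv α E) ^ k := by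
  induction k with
  | zero => simp [mpow, pv]
  | succ k ih =>
    rw [mpow]
    unfold pv
    rw [Multiset.map_bind, Multiset.sum_bind]
    have : ((mpow E k).map fun x => ((E.map fun e => x + e).map fun n => α ^ n).sum)
        = (mpow E k).map fun x => α ^ x * pv α E := by
      apply Multiset.map_congr rfl
      intro x _
      rw [← pv_map_add]
      rfl
    rw [this, Multiset.sum_map_mul_right]
    rw [show ((mpow E k).map fun x => α ^ x).sum = pv α (mpow E k) from rfl, ih]
    show pv α E ^ k * pv α E = pv α E ^ (k + 1)
    rw [pow_succ]

end Stmt9Aux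

open Stmt9Aux

/-- For a positive algebraic `α` with `N₀[α]` atomic with `0 < α < 1`, the
elasticity of `N₀[α]` is infinite: length ratios are unbounded. -/
theorem stmt9 (α : ℝ) (h0 : 0 < α) (h1 : α < 1) (halg : IsAlgebraic ℚ α)
    (hat : IsAtomicM (Nmon α)) :
    ∀ C : ℝ, ∃ x ∈ Nmon α, x ≠ 0 ∧ ∃ l L : ℕ,
      l ∈ LSet (Nmon α) x ∧ L ∈ LSet (Nmon α) x ∧ C * l < L := by
  intro C
  obtain ⟨E₀, F₀, hpv₀, hcard₀⟩ := exists_rel h0 h1 halg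
  -- WLOG card E < card F
  obtain ⟨E, F, hpv, hcard⟩ :
      ∃ E F : Multiset ℕ, pv α E = pv α F ∧ Multiset.card E < Multiset.card F := by
    rcases lt_or_gt_of_ne hcard₀ with h | h
    · exact ⟨E₀, F₀, hpv₀, h⟩
    · exact ⟨F₀, E₀, hpv₀.symm, h⟩
  have hF0 : F ≠ 0 := by
    intro hF
    rw [hF] at hcard
    simp at hcard
  have hcpos : 0 < Multiset.card E := by
    rcases Nat.eq_zero_or_pos (Multiset.card E) with h | h
    · exfalso
      have hE0 : E = 0 := Multiset.card_eq_zero.mp h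
      have hpos := pv_pos h0 hF0
      rw [← hpv, hE0, pv_zero] at hpos
      exact lt_irrefl _ hpos
    · exact h
  have hupos : 0 < pv α E := by
    rw [hpv]
    exact pv_pos h0 hF0
  have hdc : (1 : ℝ) < (Multiset.card F : ℝ) / (Multiset.card E : ℝ) := by
    rw [lt_div_iff₀ (by exact_mod_cast hcpos)]
    rw [one_mul]
    exact_mod_cast hcard
  obtain ⟨k, hk⟩ := pow_unbounded_of_one_lt C hdc
  refine ⟨(pv α E) ^ k, ?_, ?_, (Multiset.card E) ^ k, (Multiset.card F) ^ k, ?_, ?_, ?_⟩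
  · rw [← pv_mpow]
    exact pv_mem _
  · exact (pow_pos hupos k).ne'
  · refine ⟨(mpow E k).map fun n => α ^ n, ?_, ?_, ?_⟩
    · intro a ha
      obtain ⟨e, _, rfl⟩ := Multiset.mem_map.mp ha
      exact pow_atom h0 h1 hat e
    · rw [show ((mpow E k).map fun n => α ^ n).sum = pv α (mpow E k) from rfl, pv_mpow]
    · rw [Multiset.card_map, card_mpow]
  · refine ⟨(mpow F k).map fun n => α ^ n, ?_, ?_, ?_⟩
    · intro a ha
      obtain ⟨e, _, rfl⟩ := Multiset.mem_map.mp ha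
      exact pow_atom h0 h1 hat e
    · rw [show ((mpow F k).map fun n => α ^ n).sum = pv α (mpow F k) from rfl, pv_mpow, ← hpv]
    · rw [Multiset.card_map, card_mpow]
  · have hck : (0 : ℝ) < ((Multiset.card E : ℝ)) ^ k := by positivity
    have h2 : C * ((Multiset.card E : ℝ)) ^ k
        < (((Multiset.card F : ℝ)) / (Multiset.card E : ℝ)) ^ k * ((Multiset.card E : ℝ)) ^ k :=
      mul_lt_mul_of_pos_right hk hck
    have h3 : (((Multiset.card F : ℝ)) / (Multiset.card E : ℝ)) ^ k * ((Multiset.card E : ℝ)) ^ k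
        = ((Multiset.card F : ℝ)) ^ k := by
      rw [← mul_pow, div_mul_cancel₀]
      exact_mod_cast hcpos.ne'
    push_cast
    rw [h3] at h2
    exact h2
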